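/- Let G be a magnetic space group of type (c) (black and white), i.e., ρ_S ≠ 1 and ρ_{ℤ₂} = id. Then exactly one of the following holds: (c-i) Π = Π₀ and P₀ is an index-2 normal subgroup of P, or (c-ii) Π₀ is an index-2 subgroup of Π and P₀ ≅ P. -/

import Mathlib

noncomputable section

/-- The `d`-dimensional Euclidean space `V = ℝ^d`. -/
abbrev Euclid (d : ℕ) := EuclideanSpace ℝ (Fin d)

/-- The Euclidean motion group `Euc(V)`, i.e. the isometry group of `V`. -/
abbrev Euc (d : ℕ) := Euclid d ≃ᵢ Euclid d

/-- The group `ℤ₂` (written multiplicatively). -/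
abbrev C2 := Multiplicative (ZMod 2)

/-- An isometry of `V` is a translation if it is of the form `x ↦ x + v`. -/
def IsTranslation {d : ℕ} (e : Euc d) : Prop := ∀ x, e x = x + e 0

/-- A full-rank lattice in `V`: a discrete additive subgroup whose real span is all of `V`. -/
def IsFullLattice {d : ℕ} (L : AddSubgroup (Euclid d)) : Prop :=
  DiscreteTopology L ∧ Submodule.span ℝ (L : Set (Euclid d)) = ⊤

/-- The subgroup of translations in the Euclidean motion group. -/
def transSubgroup (d : ℕ) : Subgroup (Euc d) where
  carrier := {e | IsTranslation e}
  one_mem' := by intro x; simp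
  mul_mem' := by
    intro e f he hf x
    have h1 : (e * f) x = e (f x) := rfl
    have h2 : (e * f) 0 = e (f 0) := rfl
    rw [h1, h2, hf x, he (x + f 0), he (f 0)]
    abel
  inv_mem' := by
    intro e he x
    have key : ∀ y, e⁻¹ y = y - e 0 := by
      intro y
      have : e (y - e 0) = y := by rw [he (y - e 0)]; abel
      calc e⁻¹ y = e⁻¹ (e (y - e 0)) := by rw [this]
        _ = y - e 0 := e.symm_apply_apply _
    have h0 : e⁻¹ (0 : Euclid d) = -e 0 := by rw [key 0]; abel
    show e⁻¹ x = x + e⁻¹ 0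
    rw [key x, h0]; abel

/-- The lattice of translation vectors contained in a subgroup `S ⊆ Euc(V)`. -/
def transLat {d : ℕ} (S : Subgroup (Euc d)) : AddSubgroup (Euclid d) where
  carrier := {v | ∃ e ∈ S, IsTranslation e ∧ e 0 = v}
  zero_mem' := ⟨1, S.one_mem, (transSubgroup d).one_mem, by simp⟩
  add_mem' := by
    rintro a b ⟨e, heS, he, rfl⟩ ⟨f, hfS, hf, rfl⟩
    refine ⟨e * f, S.mul_mem heS hfS, (transSubgroup d).mul_mem he hf, ?_⟩
    show e (f 0) = e 0 + f 0
    rw [hf 0, he (0 + f 0)]; abel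
  neg_mem' := by
    rintro a ⟨e, heS, he, rfl⟩
    refine ⟨e⁻¹, S.inv_mem heS, (transSubgroup d).inv_mem he, ?_⟩
    have h1 : e (e⁻¹ 0) = (e⁻¹ 0) + e 0 := he (e⁻¹ 0)
    have h2 : e (e⁻¹ 0) = 0 := e.apply_symm_apply 0
    have h3 : (0 : Euclid d) = e⁻¹ 0 + e 0 := by rw [← h1, h2]
    show e⁻¹ 0 = -(e 0)
    have := congrArg (fun y => y - e 0) h3
    simpa using this.symm

/-- The lattice of translation vectors `Π = G ∩ (ℝ^d × {1})` of a subgroup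
`G ⊆ Euc(V) × ℤ₂`. -/
def magLat {d : ℕ} (G : Subgroup (Euc d × C2)) : AddSubgroup (Euclid d) :=
  transLat (G.comap (MonoidHom.inl (Euc d) C2))

/-- A crystallographic space group: `S ∩ ℝ^d` is a full-rank lattice of translations and
the point group `S/(S ∩ ℝ^d)` is finite. -/
def IsSpaceGroup {d : ℕ} (S : Subgroup (Euc d)) : Prop :=
  IsFullLattice (transLat S) ∧ (transSubgroup d).relIndex S ≠ 0

/-- A magnetic space group: `Π = G ∩ (ℝ^d × {1})` is a full-rank lattice of translations
and the magnetic point group `P = G/Π` is finite. -/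
def IsMagneticSpaceGroup {d : ℕ} (G : Subgroup (Euc d × C2)) : Prop :=
  IsFullLattice (magLat G) ∧ ((transSubgroup d).prod ⊥).relIndex G ≠ 0


/-- The subgroup of translations of a space group `S`, as a subgroup of `S`. -/
def TS {d : ℕ} (S : Subgroup (Euc d)) : Subgroup S :=
  Subgroup.comap S.subtype (transSubgroup d)

lemma c2_aux : ∀ x y : C2, y ≠ 1 → x = 1 ∨ x = y := by decide

lemma c2_eq {x y : C2} (hx : x ≠ 1) (hy : y ≠ 1) : x = y := by
  rcases c2_aux x y hy with h | h
  · exact absurd h hx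
  · exact h

lemma card_c2 : Nat.card C2 = 2 := by
  simp [Nat.card_eq_fintype_card]

lemma top_of_ne_bot {H : Subgroup C2} {x : C2} (hx : x ∈ H) (hx1 : x ≠ 1) : H = ⊤ := by
  refine top_le_iff.mp ?_
  intro y _
  rcases c2_aux y x hx1 with h | h
  · exact h ▸ H.one_mem
  · exact h ▸ hx

/-- Let `G` be a magnetic space group of type (c) (black and white),
i.e. `G = {(s, ρ_S(s)) : s ∈ S}` for a nontrivial homomorphism `ρ_S : S → ℤ₂` of a space
group `S`.  Then exactly one of the following holds:
(c-i)  `Π = Π₀` (i.e. `ρ_S` is trivial on translations) and `P₀ = S₀/Π` is an index-2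
normal subgroup of the point group `P = S/Π`; or
(c-ii) `Π₀` is an index-2 subgroup of `Π` and the natural map `P₀ → P` is an isomorphism
(i.e. the image of `S₀ = ker ρ_S` in `P` is everything). -/
theorem stmt_3 {d : ℕ} (S : Subgroup (Euc d)) (hS : IsSpaceGroup S)
    [hn : (TS S).Normal]
    (ρS : S →* C2) (hρ : ρS ≠ 1)
    (G : Subgroup (Euc d × C2))
    (hG : ∀ x : Euc d × C2, x ∈ G ↔ ∃ s : S, x = ((s : Euc d), ρS s)) :
    Xor'
      ((TS S ≤ ρS.ker) ∧
        ((ρS.ker.map (QuotientGroup.mk' (TS S))).Normal ∧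
          (ρS.ker.map (QuotientGroup.mk' (TS S))).index = 2))
      ((ρS.ker.relIndex (TS S) = 2) ∧
        ρS.ker.map (QuotientGroup.mk' (TS S)) = ⊤) := by

  by_cases hle : TS S ≤ ρS.ker
  · -- case (c-i)
    left
    have hker2 : ρS.ker.index = 2 := by
      rw [Subgroup.index_ker ρS]
      have hrange : ρS.range = ⊤ := by
        obtain ⟨s, hs⟩ : ∃ s, ρS s ≠ 1 := by
          by_contra h
          push_neg at h
          exact hρ (MonoidHom.ext fun s => h s)
        exact top_of_ne_bot ⟨s, rfl⟩ hs
      rw [hrange, Subgroup.card_top]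
      exact card_c2
    have hidx : (ρS.ker.map (QuotientGroup.mk' (TS S))).index = 2 := by
      rw [Subgroup.index_map_eq _ (QuotientGroup.mk'_surjective (TS S))
        (by rwa [QuotientGroup.ker_mk'])]
      exact hker2
    refine ⟨⟨hle, ρS.normal_ker.map _ (QuotientGroup.mk'_surjective (TS S)), hidx⟩, ?_⟩
    rintro ⟨-, htop⟩
    rw [htop, Subgroup.index_top] at hidx
    norm_num at hidx
  · -- case (c-ii)
    right
    obtain ⟨t, htT, htk⟩ : ∃ t, t ∈ TS S ∧ t ∉ ρS.ker := by
      simpa [SetLike.le_def] using hle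
    rw [MonoidHom.mem_ker] at htk
    constructor
    constructor
    · rw [Subgroup.relIndex_ker (TS S) ρS]
      have : (TS S).map ρS = ⊤ := top_of_ne_bot ⟨t, htT, rfl⟩ htk
      rw [this, Subgroup.card_top]
      exact card_c2
    · refine top_le_iff.mp ?_
      intro q _
      induction q using QuotientGroup.induction_on with
      | H s =>
        by_cases hs : s ∈ ρS.ker
        · exact ⟨s, hs, rfl⟩
        · rw [MonoidHom.mem_ker] at hs
          refine ⟨s * t⁻¹, ?_, ?_⟩
          · refine MonoidHom.mem_ker.mpr ?_
            rw [map_mul, map_inv, c2_eq hs htk]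
            simp
          · have ht1 : (QuotientGroup.mk' (TS S)) t = 1 := by
              rw [← QuotientGroup.ker_mk' (TS S)] at htT
              exact htT
            rw [map_mul, map_inv, ht1]
            simp
    · rintro ⟨h1, -⟩
      exact hle h1
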